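/- For every m ≥ 1, let G be the simple graph on the vertex set of functions Fin m → Fin 4 in which distinct x and y are adjacent if and only if A_m x y = 1, and let H be the induced subgraph of G on the vertices x not equal to the constant function 3 (removing the unique isolated vertex). Then H is a strongly regular graph with parameters (4^m − 1, 2^(2m−1), 4^(m−1), 4^(m−1)): it has 4^m − 1 vertices, is 2^(2m−1)-regular, adjacent vertices have exactly 4^(m−1) common neighbours, and non-adjacent vertices have exactly 4^(m−1) common neighbours. -/

import Mathlib

/-- The adjacency matrix of a triangle together with an isolated vertex, over `F2`. -/
def A1 : Matrix (Fin 4) (Fin 4) (ZMod 2) :=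
  !![0,1,1,0; 1,0,1,0; 1,1,0,0; 0,0,0,0]

/-- The adjacency matrix of the `m`-fold parity product of the triangle-plus-isolated-vertex
graph, indexed by functions `Fin m → Fin 4`. -/
def Am (m : ℕ) : Matrix (Fin m → Fin 4) (Fin m → Fin 4) (ZMod 2) :=
  Matrix.of fun x y => ∑ i : Fin m, A1 (x i) (y i)

lemma A1_symm : ∀ a b : Fin 4, A1 a b = A1 b a := by
  intro a b; fin_cases a <;> fin_cases b <;> first | rfl | simp [A1]

/-- The graph on `Fin m → Fin 4` whose adjacency is given by `A_m`. -/
def Gm (m : ℕ) : SimpleGraph (Fin m → Fin 4) where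
  Adj x y := x ≠ y ∧ Am m x y = 1
  symm := ⟨by
    intro x y ⟨hne, h⟩
    refine ⟨hne.symm, ?_⟩
    have : Am m y x = Am m x y := by
      show ∑ i : Fin m, A1 (y i) (x i) = ∑ i : Fin m, A1 (x i) (y i)
      exact Finset.sum_congr rfl fun i _ => A1_symm (y i) (x i)
    rw [this]; exact h⟩
  loopless := ⟨fun x h => h.1 rfl⟩

instance (m : ℕ) : DecidableRel (Gm m).Adj :=
  fun x y => decidable_of_iff (x ≠ y ∧ Am m x y = 1) Iff.rfl

instance (m : ℕ) (S : Set (Fin m → Fin 4)) : DecidableRel ((Gm m).induce S).Adj :=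
  fun a b => decidable_of_iff ((Gm m).Adj a b) Iff.rfl


abbrev V2 := ZMod 2 × ZMod 2

def bV (u v : V2) : ZMod 2 := u.1 * v.2 + u.2 * v.1

def e4 : Fin 4 → V2 := ![(1,0), (0,1), (1,1), (0,0)]

lemma e4_bij : Function.Bijective e4 := by decide

noncomputable def EE (m : ℕ) : (Fin m → Fin 4) ≃ (Fin m → V2) :=
  Equiv.piCongrRight fun _ => Equiv.ofBijective e4 e4_bij

lemma EE_apply (m : ℕ) (x : Fin m → Fin 4) (i : Fin m) : EE m x i = e4 (x i) := rfl

def Bm (m : ℕ) (u v : Fin m → V2) : ZMod 2 := ∑ i, bV (u i) (v i)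

lemma bV_add_right : ∀ u v w : V2, bV u (v + w) = bV u v + bV u w := by decide
lemma bV_add_left : ∀ u v w : V2, bV (u + v) w = bV u w + bV v w := by decide
lemma bV_zero_right : ∀ u : V2, bV u 0 = 0 := by decide
lemma bV_self : ∀ u : V2, bV u u = 0 := by decide
lemma bV_smul_right : ∀ (r : ZMod 2) (u v : V2), bV u (r • v) = r * bV u v := by decide

lemma Bm_add_right (m : ℕ) (u v w : Fin m → V2) :
    Bm m u (v + w) = Bm m u v + Bm m u w := by
  unfold Bm
  rw [← Finset.sum_add_distrib]
  exact Finset.sum_congr rfl fun i _ => bV_add_right _ _ _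

lemma Bm_add_left (m : ℕ) (u v w : Fin m → V2) :
    Bm m (u + v) w = Bm m u w + Bm m v w := by
  unfold Bm
  rw [← Finset.sum_add_distrib]
  exact Finset.sum_congr rfl fun i _ => bV_add_left _ _ _

lemma Bm_zero_right (m : ℕ) (u : Fin m → V2) : Bm m u 0 = 0 := by
  simp [Bm, bV_zero_right]

lemma Bm_self (m : ℕ) (u : Fin m → V2) : Bm m u u = 0 := by
  simp [Bm, bV_self]

lemma Bm_smul_right (m : ℕ) (r : ZMod 2) (u v : Fin m → V2) :
    Bm m u (r • v) = r * Bm m u v := by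
  unfold Bm
  rw [Finset.mul_sum]
  exact Finset.sum_congr rfl fun i _ => bV_smul_right _ _ _

lemma Bm_exists_one {m : ℕ} {u : Fin m → V2} (hu : u ≠ 0) : ∃ v, Bm m u v = 1 := by
  have : ∃ i, u i ≠ 0 := by
    by_contra h
    push_neg at h
    exact hu (funext fun i => h i)
  obtain ⟨i, hi⟩ := this
  have hq : ∀ p : V2, p ≠ 0 → ∃ q, bV p q = 1 := by decide
  obtain ⟨q, hq⟩ := hq _ hi
  refine ⟨Pi.single i q, ?_⟩
  unfold Bm
  rw [Finset.sum_eq_single i]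
  · rw [Pi.single_eq_same, hq]
  · intro j _ hj
    rw [Pi.single_eq_of_ne hj, bV_zero_right]
  · intro h; exact absurd (Finset.mem_univ i) h

lemma card_fiber_mul {α β : Type*} [Fintype α] [Fintype β] [DecidableEq β] (f : α → β)
    (h : ∀ c c' : β, Fintype.card {x // f x = c} = Fintype.card {x // f x = c'}) (c : β) :
    Fintype.card {x // f x = c} * Fintype.card β = Fintype.card α := by
  have hs := Fintype.card_congr (Equiv.sigmaFiberEquiv f)
  rw [Fintype.card_sigma] at hs
  rw [← hs]
  rw [Finset.sum_congr rfl fun c' _ => (h c' c)]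
  simp [mul_comm]

lemma add_sub_iff {G : Type*} [AddCommGroup G] (a c c' : G) : a + (c' - c) = c' ↔ a = c := by
  constructor
  · intro h
    have := eq_sub_of_add_eq h
    rwa [sub_sub_cancel] at this
  · intro h; rw [h]; abel

lemma count_one {m : ℕ} (hm : 1 ≤ m) {u : Fin m → V2} (hu : u ≠ 0) :
    Fintype.card {z : Fin m → V2 // Bm m u z = 1} = 2 ^ (2 * m - 1) := by
  obtain ⟨w, hw⟩ := Bm_exists_one hu
  have hfib : ∀ c c' : ZMod 2,
      Fintype.card {z : Fin m → V2 // Bm m u z = c} =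
      Fintype.card {z : Fin m → V2 // Bm m u z = c'} := by
    intro c c'
    refine Fintype.card_congr ((Equiv.addRight ((c' - c) • w)).subtypeEquiv fun z => ?_)
    rw [Equiv.coe_addRight, Bm_add_right, Bm_smul_right, hw, mul_one, add_sub_iff]
  have key := card_fiber_mul (fun z => Bm m u z) hfib 1
  have hcard : Fintype.card (Fin m → V2) = 4 ^ m := by
    simp [Fintype.card_fun]
  have h2 : Fintype.card (ZMod 2) = 2 := by simp
  rw [hcard, h2] at key
  have h4 : (4 : ℕ) ^ m = 2 ^ (2 * m - 1) * 2 := by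
    rw [show (4 : ℕ) = 2 ^ 2 from rfl, ← pow_mul, ← pow_succ]
    congr 1
    omega
  rw [h4] at key
  exact Nat.eq_of_mul_eq_mul_right (by norm_num) key

lemma count_pair {m : ℕ} (hm : 1 ≤ m) {X Y : Fin m → V2} (hX : X ≠ 0) (hY : Y ≠ 0)
    (hXY : X ≠ Y) :
    Fintype.card {z : Fin m → V2 // Bm m X z = 1 ∧ Bm m Y z = 1} = 4 ^ (m - 1) := by
  set f : (Fin m → V2) → V2 := fun z => (Bm m X z, Bm m Y z) with hf
  have hfadd : ∀ z z', f (z + z') = f z + f z' := by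
    intro z z'
    simp [hf, Bm_add_right, Prod.ext_iff]
  -- surjectivity
  obtain ⟨a, ha⟩ := Bm_exists_one hX
  obtain ⟨b, hb⟩ := Bm_exists_one hY
  have hXYne : X + Y ≠ 0 := by
    intro h
    apply hXY
    have hneg : ∀ p : V2, -p = p := by decide
    have := eq_neg_of_add_eq_zero_left h
    rw [this]
    exact funext fun i => hneg (Y i)
  obtain ⟨c, hc⟩ := Bm_exists_one hXYne
  rw [Bm_add_left] at hc
  have hsurj : ∀ t : V2, ∃ z, f z = t := by
    intro t
    have hdec : ∀ α β γ δ p q : ZMod 2, γ + δ = 1 →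
        ∃ ε₁ ε₂ ε₃ : ZMod 2,
          ε₁ * 1 + ε₂ * β + ε₃ * γ = p ∧ ε₁ * α + ε₂ * 1 + ε₃ * δ = q := by decide
    obtain ⟨ε₁, ε₂, ε₃, h1, h2⟩ :=
      hdec (Bm m Y a) (Bm m X b) (Bm m X c) (Bm m Y c) t.1 t.2 hc
    refine ⟨ε₁ • a + ε₂ • b + ε₃ • c, ?_⟩
    have e1 : Bm m X (ε₁ • a + ε₂ • b + ε₃ • c) = ε₁ * 1 + ε₂ * Bm m X b + ε₃ * Bm m X c := by
      rw [Bm_add_right, Bm_add_right, Bm_smul_right, Bm_smul_right, Bm_smul_right, ha]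
    have e2 : Bm m Y (ε₁ • a + ε₂ • b + ε₃ • c) = ε₁ * Bm m Y a + ε₂ * 1 + ε₃ * Bm m Y c := by
      rw [Bm_add_right, Bm_add_right, Bm_smul_right, Bm_smul_right, Bm_smul_right, hb]
    simp only [hf]
    rw [e1, e2, h1, h2]
  have hfib : ∀ c c' : V2,
      Fintype.card {z : Fin m → V2 // f z = c} =
      Fintype.card {z : Fin m → V2 // f z = c'} := by
    intro t t'
    obtain ⟨z₀, hz₀⟩ := hsurj (t' - t)
    refine Fintype.card_congr ((Equiv.addRight z₀).subtypeEquiv fun z => ?_)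
    rw [Equiv.coe_addRight, hfadd, hz₀, add_sub_iff]
  have key := card_fiber_mul f hfib (1, 1)
  have hcard : Fintype.card (Fin m → V2) = 4 ^ m := by
    simp [Fintype.card_fun]
  have h2 : Fintype.card V2 = 4 := by simp
  rw [hcard, h2] at key
  have h4 : (4 : ℕ) ^ m = 4 ^ (m - 1) * 4 := by
    rw [← pow_succ]
    congr 1
    omega
  rw [h4] at key
  have := Nat.eq_of_mul_eq_mul_right (show 0 < 4 by norm_num) key
  rw [← this]
  exact Fintype.card_congr (Equiv.subtypeEquivRight fun z => by simp [hf, Prod.ext_iff])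

lemma A1_eq_bV : ∀ a b : Fin 4, A1 a b = bV (e4 a) (e4 b) := by
  intro a b; fin_cases a <;> fin_cases b <;> simp [A1, bV, e4] <;> decide

lemma Am_eq (m : ℕ) (x y : Fin m → Fin 4) : Am m x y = Bm m (EE m x) (EE m y) := by
  show (∑ i, A1 (x i) (y i)) = ∑ i, bV (EE m x i) (EE m y i)
  exact Finset.sum_congr rfl fun i _ => A1_eq_bV (x i) (y i)

lemma EE_ne_zero {m : ℕ} {x : Fin m → Fin 4} : EE m x ≠ 0 ↔ x ≠ (fun _ => 3) := by
  have he : ∀ a : Fin 4, e4 a = 0 ↔ a = 3 := by decide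
  constructor
  · intro h hx
    exact h (funext fun i => by rw [EE_apply, hx]; exact (he 3).2 rfl)
  · intro h h0
    exact h (funext fun i => (he (x i)).1 (congrFun h0 i))

lemma adj_iff (m : ℕ) (x y : Fin m → Fin 4) :
    (Gm m).Adj x y ↔ Bm m (EE m x) (EE m y) = 1 := by
  constructor
  · rintro ⟨-, h⟩; rwa [Am_eq] at h
  · intro h
    refine ⟨?_, by rwa [Am_eq]⟩
    rintro rfl
    rw [Bm_self] at h
    exact zero_ne_one h

/-- For every `m ≥ 1`, the induced subgraph of `G_m` on the vertices other than the constant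
function `3` (the unique isolated vertex) is strongly regular with parameters
`(4^m - 1, 2^(2m-1), 4^(m-1), 4^(m-1))`. -/
theorem stmt_11 (m : ℕ) (hm : 1 ≤ m) :
    ((Gm m).induce {x | x ≠ fun _ => 3}).IsSRGWith
      (4 ^ m - 1) (2 ^ (2 * m - 1)) (4 ^ (m - 1)) (4 ^ (m - 1)) := by
  set S : Set (Fin m → Fin 4) := {x | x ≠ fun _ => 3} with hSdef
  have hmemS : ∀ y : Fin m → Fin 4, y ∈ S ↔ EE m y ≠ 0 := by
    intro y
    constructor
    · intro hy; exact EE_ne_zero.2 hy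
    · intro hy; exact EE_ne_zero.1 hy
  have key : ∀ v w : ↥S, ↑v ≠ (↑w : Fin m → Fin 4) →
      Fintype.card (((Gm m).induce S).commonNeighbors v w) = 4 ^ (m - 1) := by
    intro v w hne
    have hX : EE m ↑v ≠ 0 := (hmemS _).1 v.2
    have hY : EE m ↑w ≠ 0 := (hmemS _).1 w.2
    have hXY : EE m ↑v ≠ EE m ↑w := fun h => hne ((EE m).injective h)
    rw [← count_pair hm hX hY hXY]
    refine Fintype.card_congr ?_
    refine (Equiv.subtypeEquivRight fun z => SimpleGraph.mem_commonNeighbors _).trans ?_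
    refine (Equiv.subtypeSubtypeEquivSubtypeInter (· ∈ S)
      (fun y => (Gm m).Adj ↑v y ∧ (Gm m).Adj ↑w y)).trans ?_
    refine (Equiv.subtypeEquivRight fun y => ?_).trans
      ((EE m).subtypeEquiv fun y => Iff.rfl)
    constructor
    · rintro ⟨-, h1, h2⟩
      exact ⟨(adj_iff m _ _).1 h1, (adj_iff m _ _).1 h2⟩
    · rintro ⟨h1, h2⟩
      refine ⟨(hmemS y).2 fun h0 => ?_, (adj_iff m _ _).2 h1, (adj_iff m _ _).2 h2⟩
      rw [h0, Bm_zero_right] at h1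
      exact zero_ne_one h1
  constructor
  · -- card
    have h1 : Fintype.card ↥S = Fintype.card (Fin m → Fin 4) -
        Fintype.card {x : Fin m → Fin 4 // x = fun _ => 3} := by
      exact Fintype.card_subtype_compl _
    rw [h1, Fintype.card_subtype_eq]
    simp [Fintype.card_fun]
  · -- regular
    intro v
    have hX : EE m ↑v ≠ 0 := (hmemS _).1 v.2
    rw [← SimpleGraph.card_neighborSet_eq_degree, ← count_one hm hX]
    refine Fintype.card_congr ?_
    refine (Equiv.subtypeSubtypeEquivSubtypeInter (· ∈ S)
      (fun y => (Gm m).Adj ↑v y)).trans ?_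
    refine (Equiv.subtypeEquivRight fun y => ?_).trans
      ((EE m).subtypeEquiv fun y => Iff.rfl)
    constructor
    · rintro ⟨-, h1⟩
      exact (adj_iff m _ _).1 h1
    · intro h1
      refine ⟨(hmemS y).2 fun h0 => ?_, (adj_iff m _ _).2 h1⟩
      rw [h0, Bm_zero_right] at h1
      exact zero_ne_one h1
  · -- adjacent
    intro v w hadj
    refine key v w fun h => ?_
    have : (Gm m).Adj ↑v ↑w := hadj
    rw [h] at this
    exact (Gm m).irrefl this
  · -- non-adjacent
    intro v w hvw _
    exact key v w fun h => hvw (Subtype.ext h)
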